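/- Weierstrass's counterexample to the Dirichlet principle: the infimum of the Dirichlet-type energy J(y) = ∫_{−1}^{1} (x · y'(x))² dx over all continuously differentiable functions y : [−1, 1] → ℝ with y(−1) = −1 and y(1) = 1 equals 0, but no admissible function attains this infimum. -/

import Mathlib

open Set

open MeasureTheory in
private lemma weier_aux (ε : ℝ) (hε : 0 < ε) (hε1 : ε ≤ 1) :
    ∃ y : ℝ → ℝ, (ContDiffOn ℝ 1 y (Set.Icc (-1 : ℝ) 1) ∧ y (-1) = -1 ∧ y 1 = 1) ∧
      (∫ x in (-1 : ℝ)..1, (x * derivWithin y (Set.Icc (-1 : ℝ) 1) x) ^ 2) ≤ 3 * ε := by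
  set A := Real.arctan (1 / ε) with hA
  have hApos : 0 < A := by
    rw [hA, ← Real.arctan_zero]
    exact Real.arctan_strictMono (by positivity)
  have hA4 : Real.pi / 4 ≤ A := by
    rw [hA, ← Real.arctan_one]
    refine Real.arctan_strictMono.monotone ?_
    rw [le_div_iff₀ hε]; linarith
  set y : ℝ → ℝ := fun x => Real.arctan (x / ε) / A with hy
  have hεs : (0:ℝ) < ε ^ 2 := by positivity
  -- derivative of y
  have hd : ∀ x : ℝ, HasDerivAt y (ε / ((ε ^ 2 + x ^ 2) * A)) x := by
    intro x
    have h1 : HasDerivAt (fun t : ℝ => t / ε) (1 / ε) x := by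
      simpa using (hasDerivAt_id x).div_const ε
    have h2 := (h1.arctan).div_const A
    refine h2.congr_deriv ?_
    have hx2 : (0:ℝ) < ε ^ 2 + x ^ 2 := by positivity
    field_simp
  have hdw : ∀ x ∈ Set.Icc (-1:ℝ) 1,
      derivWithin y (Set.Icc (-1:ℝ) 1) x = ε / ((ε ^ 2 + x ^ 2) * A) := fun x hx =>
    ((hd x).hasDerivWithinAt).derivWithin (uniqueDiffOn_Icc (by norm_num) x hx)
  refine ⟨y, ⟨?_, ?_, ?_⟩, ?_⟩
  · exact ((Real.contDiff_arctan.comp (contDiff_id.div_const ε)).div_const A).contDiffOn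
  · show Real.arctan (-1 / ε) / A = -1
    rw [neg_div, Real.arctan_neg, ← hA, neg_div, div_self hApos.ne']
  · show Real.arctan (1 / ε) / A = 1
    rw [← hA, div_self hApos.ne']
  · -- integral bound
    have hcont1 : Continuous fun x : ℝ => (x * (ε / ((ε ^ 2 + x ^ 2) * A))) ^ 2 := by
      apply Continuous.pow
      exact continuous_id.mul (continuous_const.div
        ((continuous_const.add (continuous_pow 2)).mul continuous_const)
        (fun x => by positivity))
    have hcont2 : Continuous fun x : ℝ => ε ^ 2 / ((ε ^ 2 + x ^ 2) * A ^ 2) :=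
      continuous_const.div
        ((continuous_const.add (continuous_pow 2)).mul continuous_const)
        (fun x => by positivity)
    have hstep1 : (∫ x in (-1:ℝ)..1, (x * derivWithin y (Set.Icc (-1:ℝ) 1) x) ^ 2)
        = ∫ x in (-1:ℝ)..1, (x * (ε / ((ε ^ 2 + x ^ 2) * A))) ^ 2 := by
      apply intervalIntegral.integral_congr
      intro x hx
      rw [Set.uIcc_of_le (by norm_num : (-1:ℝ) ≤ 1)] at hx
      simp only [hdw x hx]
    have hstep2 : (∫ x in (-1:ℝ)..1, (x * (ε / ((ε ^ 2 + x ^ 2) * A))) ^ 2)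
        ≤ ∫ x in (-1:ℝ)..1, ε ^ 2 / ((ε ^ 2 + x ^ 2) * A ^ 2) := by
      apply intervalIntegral.integral_mono_on (by norm_num)
        (hcont1.intervalIntegrable _ _) (hcont2.intervalIntegrable _ _)
      intro x _
      have hx2 : (0:ℝ) < ε ^ 2 + x ^ 2 := by positivity
      have heq : (x * (ε / ((ε ^ 2 + x ^ 2) * A))) ^ 2
          = x ^ 2 / (ε ^ 2 + x ^ 2) * (ε ^ 2 / ((ε ^ 2 + x ^ 2) * A ^ 2)) := by
        field_simp
      rw [heq]
      have h1 : x ^ 2 / (ε ^ 2 + x ^ 2) ≤ 1 := by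
        rw [div_le_one hx2]; nlinarith
      have h2 : 0 ≤ ε ^ 2 / ((ε ^ 2 + x ^ 2) * A ^ 2) := by positivity
      calc x ^ 2 / (ε ^ 2 + x ^ 2) * (ε ^ 2 / ((ε ^ 2 + x ^ 2) * A ^ 2))
          ≤ 1 * (ε ^ 2 / ((ε ^ 2 + x ^ 2) * A ^ 2)) := by
            exact mul_le_mul_of_nonneg_right h1 h2
        _ = ε ^ 2 / ((ε ^ 2 + x ^ 2) * A ^ 2) := one_mul _
    have hstep3 : (∫ x in (-1:ℝ)..1, ε ^ 2 / ((ε ^ 2 + x ^ 2) * A ^ 2)) = 2 * ε / A := by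
      have hF : ∀ x ∈ Set.uIcc (-1:ℝ) 1,
          HasDerivAt (fun t : ℝ => ε / A ^ 2 * Real.arctan (t / ε))
            (ε ^ 2 / ((ε ^ 2 + x ^ 2) * A ^ 2)) x := by
        intro x _
        have h1 : HasDerivAt (fun t : ℝ => t / ε) (1 / ε) x := by
          simpa using (hasDerivAt_id x).div_const ε
        have h2 := (h1.arctan).const_mul (ε / A ^ 2)
        refine h2.congr_deriv ?_
        have hx2 : (0:ℝ) < ε ^ 2 + x ^ 2 := by positivity
        field_simp
      rw [intervalIntegral.integral_eq_sub_of_hasDerivAt hF (hcont2.intervalIntegrable _ _)]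
      have : Real.arctan (-1 / ε) = -A := by rw [neg_div, Real.arctan_neg, hA]
      rw [this, ← hA]
      field_simp
      ring
    have hfin : 2 * ε / A ≤ 3 * ε := by
      have hpi : (3:ℝ) < Real.pi := Real.pi_gt_three
      have h1 : 2 * ε / A ≤ 2 * ε / (Real.pi / 4) :=
        div_le_div_of_nonneg_left (by positivity) (by positivity) hA4
      have h2 : 2 * ε / (Real.pi / 4) = 8 * ε / Real.pi := by ring
      have h3 : 8 * ε / Real.pi ≤ 3 * ε := by
        rw [div_le_iff₀ Real.pi_pos]
        nlinarith
      linarith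
    linarith [hstep1, hstep2, hstep3]

/-- Weierstrass's counterexample to the Dirichlet principle: over all `C¹` functions
`y : [−1,1] → ℝ` with `y(−1) = −1`, `y(1) = 1`, the infimum of
`J(y) = ∫_{−1}^{1} (x y'(x))² dx` is `0`, but it is attained by no admissible function. -/
theorem weierstrass_dirichlet_counterexample :
    IsGLB ((fun y : ℝ → ℝ =>
        ∫ x in (-1 : ℝ)..1, (x * derivWithin y (Set.Icc (-1 : ℝ) 1) x) ^ 2) ''
      {y : ℝ → ℝ | ContDiffOn ℝ 1 y (Set.Icc (-1 : ℝ) 1) ∧ y (-1) = -1 ∧ y 1 = 1}) 0 ∧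
    ∀ y : ℝ → ℝ, ContDiffOn ℝ 1 y (Set.Icc (-1 : ℝ) 1) → y (-1) = -1 → y 1 = 1 →
      0 < ∫ x in (-1 : ℝ)..1, (x * derivWithin y (Set.Icc (-1 : ℝ) 1) x) ^ 2 := by
  constructor
  · constructor
    · rintro v ⟨y, _, rfl⟩
      exact intervalIntegral.integral_nonneg (by norm_num) (fun u _ => sq_nonneg _)
    · intro w hw
      by_contra hw0
      push_neg at hw0
      have hwpos : 0 < w := hw0
      have hmin : 0 < min (w / 6) 1 := lt_min (by linarith) one_pos
      obtain ⟨y, hadm, hle⟩ := weier_aux (min (w / 6) 1) hmin (min_le_right _ _)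
      have hwle : w ≤ ∫ x in (-1 : ℝ)..1, (x * derivWithin y (Set.Icc (-1 : ℝ) 1) x) ^ 2 :=
        hw ⟨y, hadm, rfl⟩
      have h1 : 3 * min (w / 6) 1 ≤ 3 * (w / 6) := by
        have := min_le_left (w / 6) 1
        linarith
      linarith
  · intro y hy h1 h2
    have hus : UniqueDiffOn ℝ (Set.Icc (-1:ℝ) 1) := uniqueDiffOn_Icc (by norm_num)
    set g := derivWithin y (Set.Icc (-1:ℝ) 1) with hg
    have hgc : ContinuousOn g (Set.Icc (-1:ℝ) 1) := hy.continuousOn_derivWithin hus le_rfl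
    have hfc : ContinuousOn (fun x => (x * g x) ^ 2) (Set.Icc (-1:ℝ) 1) :=
      (continuousOn_id.mul hgc).pow 2
    have hint : IntervalIntegrable (fun x => (x * g x) ^ 2) MeasureTheory.volume (-1) 1 := by
      apply ContinuousOn.intervalIntegrable
      rwa [Set.uIcc_of_le (by norm_num : (-1:ℝ) ≤ 1)]
    have hgint : IntervalIntegrable g MeasureTheory.volume (-1) 1 := by
      apply ContinuousOn.intervalIntegrable
      rwa [Set.uIcc_of_le (by norm_num : (-1:ℝ) ≤ 1)]
    have hnn : 0 ≤ ∫ x in (-1:ℝ)..1, (x * g x) ^ 2 :=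
      intervalIntegral.integral_nonneg (by norm_num) (fun u _ => sq_nonneg _)
    rcases lt_or_eq_of_le hnn with h | h
    · exact h
    exfalso
    have hzero : (fun x => (x * g x) ^ 2)
        =ᵐ[MeasureTheory.volume.restrict (Set.Ioc (-1:ℝ) 1)] 0 := by
      rw [← intervalIntegral.integral_eq_zero_iff_of_le_of_nonneg_ae (by norm_num)
        (Filter.Eventually.of_forall (fun x => sq_nonneg _)) hint]
      exact h.symm
    have hne : ∀ᵐ x ∂(MeasureTheory.volume.restrict (Set.Ioc (-1:ℝ) 1)), x ≠ (0:ℝ) := by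
      rw [MeasureTheory.ae_iff]
      have hsub : {x : ℝ | ¬ x ≠ 0} ⊆ {(0:ℝ)} := by
        intro x hx
        simp only [Set.mem_setOf_eq, not_not] at hx
        simp [hx]
      refine le_antisymm ?_ zero_le
      calc MeasureTheory.volume.restrict (Set.Ioc (-1:ℝ) 1) {x : ℝ | ¬ x ≠ 0}
          ≤ MeasureTheory.volume.restrict (Set.Ioc (-1:ℝ) 1) {(0:ℝ)} :=
            MeasureTheory.measure_mono hsub
        _ ≤ MeasureTheory.volume {(0:ℝ)} :=
            MeasureTheory.Measure.restrict_le_self _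
        _ = 0 := Real.volume_singleton
    have hg0 : g =ᵐ[MeasureTheory.volume.restrict (Set.Ioc (-1:ℝ) 1)] 0 := by
      filter_upwards [hzero, hne] with x hx hxne
      have hx' : (x * g x) ^ 2 = 0 := hx
      have := pow_eq_zero_iff (two_ne_zero) |>.mp hx'
      rcases mul_eq_zero.mp this with h' | h'
      · exact absurd h' hxne
      · exact h'
    have hFTC : ∫ x in (-1:ℝ)..1, g x = y 1 - y (-1) := by
      apply intervalIntegral.integral_eq_sub_of_hasDeriv_right_of_le (by norm_num)
        hy.continuousOn _ hgint
      intro x hx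
      have hdiff : DifferentiableWithinAt ℝ y (Set.Icc (-1:ℝ) 1) x :=
        (hy.differentiableOn one_ne_zero) x (Set.mem_Icc_of_Ioo hx)
      exact hdiff.hasDerivWithinAt.mono_of_mem_nhdsWithin
        (mem_nhdsWithin_of_mem_nhds (Icc_mem_nhds hx.1 hx.2))
    have hzero' : ∫ x in (-1:ℝ)..1, g x = 0 := by
      rw [intervalIntegral.integral_of_le (by norm_num : (-1:ℝ) ≤ 1)]
      exact MeasureTheory.integral_eq_zero_of_ae hg0
    rw [h1, h2] at hFTC
    rw [hzero'] at hFTC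
    norm_num at hFTC
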